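/- If G is the directed ring (directed cycle) on n vertices and the age of the labeling is restricted to at most n−1, then the temporality of G with respect to the all-paths property equals n−1; in fact, the only way to preserve all simple paths with age n−1 is to assign to every edge all of the labels 1, 2, …, n−1 (up to a common shift). -/

import Mathlib

/-- `w` is a simple path of the digraph with edge relation `E`: a sequence of
`k + 1` distinct vertices joined by consecutive edges. -/
def IsPath {V : Type*} (E : V → V → Prop) {k : ℕ} (w : Fin (k + 1) → V) : Prop :=
  Function.Injective w ∧ ∀ i : Fin k, E (w i.castSucc) (w i.succ)

/-- The labeling `lab` preserves the path `w`: there is a strictly increasing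
choice of labels along the consecutive edges of `w`. -/
def Preserves {V : Type*} (lab : V → V → Finset ℕ) {k : ℕ} (w : Fin (k + 1) → V) : Prop :=
  ∃ l : Fin k → ℕ, StrictMono l ∧ ∀ i : Fin k, l i ∈ lab (w i.castSucc) (w i.succ)

/-- The labeling `lab` preserves every simple path of the digraph `E`
(the "all paths" property). -/
def PreservesAll {V : Type*} (E : V → V → Prop) (lab : V → V → Finset ℕ) : Prop :=
  ∀ (k : ℕ) (w : Fin (k + 1) → V), IsPath E w → Preserves lab w

/-- The directed ring on `n` vertices `0, 1, …, n-1`: there is an edge from `i`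
to `j` iff `j = i + 1 (mod n)`. -/
def ringAdj (n : ℕ) : Fin n → Fin n → Prop :=
  fun i j => (j : ℕ) = ((i : ℕ) + 1) % n

lemma strictMono_step {m : ℕ} {l : Fin m → ℕ} (hl : StrictMono l) :
    ∀ d (i j : Fin m), (j : ℕ) = (i : ℕ) + d → l i + d ≤ l j := by
  intro d
  induction d with
  | zero =>
    intro i j h
    have hij : i = j := Fin.ext (by omega)
    rw [hij]; omega
  | succ d ih =>
    intro i j h
    have hd : (i : ℕ) + d < m := by omega
    have h1 := ih i ⟨(i : ℕ) + d, hd⟩ rfl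
    have h2 : l ⟨(i : ℕ) + d, hd⟩ < l j := hl (by simp [Fin.lt_def]; omega)
    omega

/-- On the directed ring with `n ≥ 3` vertices, with the age restricted to at most
`n - 1`, the temporality w.r.t. the all-paths property equals `n - 1`:
the labeling assigning `{1, …, n-1}` to every edge preserves all simple paths
(so `n - 1` labels per edge and age `n - 1` suffice), and conversely every
labeling of age at most `n - 1` (all labels lying in a window `[a, a + n - 2]`
for a common shift `a`) that preserves all simple paths must assign to every
edge all of the `n - 1` labels `a, a + 1, …, a + n - 2`. -/
theorem ring_age_restricted_temporality (n : ℕ) (hn : 3 ≤ n) :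
    PreservesAll (ringAdj n) (fun _ _ => Finset.Icc 1 (n - 1)) ∧
    ∀ (lab : Fin n → Fin n → Finset ℕ) (a : ℕ),
      (∀ i j : Fin n, ringAdj n i j → ∀ t ∈ lab i j, t ∈ Finset.Icc a (a + n - 2)) →
      PreservesAll (ringAdj n) lab →
      ∀ i j : Fin n, ringAdj n i j → lab i j = Finset.Icc a (a + n - 2) := by
  haveI : NeZero n := ⟨by omega⟩
  constructor
  · intro k w hw
    have hcard : k + 1 ≤ n := by
      simpa using Fintype.card_le_of_injective w hw.1
    refine ⟨fun x => (x : ℕ) + 1, fun x y h => by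
      have := Fin.lt_def.mp h
      show (x : ℕ) + 1 < (y : ℕ) + 1
      omega, fun x => ?_⟩
    simp only [Finset.mem_Icc]
    have := x.isLt
    omega
  · intro lab a hwin hpres i j hij
    ext t
    simp only [Finset.mem_Icc]
    constructor
    · intro ht
      exact Finset.mem_Icc.mp (hwin i j hij t ht)
    · rintro ⟨h1, h2⟩
      set s := t - a with hs
      have hsle : s ≤ n - 2 := by omega
      have e : n - 1 + 1 = n := by omega
      letI : NatCast (Fin n) := Fin.NatCast.instNatCast n
      set v : Fin n := i - (s : Fin n) with hv
      set w : Fin (n - 1 + 1) → Fin n := fun x => v + Fin.cast e x with hwdef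
      have hval : ∀ x : Fin (n - 1 + 1), (w x : ℕ) = ((v : ℕ) + (x : ℕ)) % n := by
        intro x
        simp [hwdef, Fin.add_def]
      have hpath : IsPath (ringAdj n) w := by
        constructor
        · intro x y hxy
          have : Fin.cast e x = Fin.cast e y := by
            have := congrArg (fun z => z - v) hxy
            simpa [hwdef, add_comm, add_sub_cancel_right] using this
          exact Fin.ext (by simpa [Fin.ext_iff] using this)
        · intro x
          show (w x.succ : ℕ) = ((w x.castSucc : ℕ) + 1) % n
          rw [hval, hval]
          simp only [Fin.val_succ, Fin.coe_castSucc, Nat.mod_add_mod]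
          ring_nf
      obtain ⟨l, hmono, hmem⟩ := hpres (n - 1) w hpath
      have hbound : ∀ x : Fin (n - 1), a ≤ l x ∧ l x ≤ a + n - 2 := fun x =>
        Finset.mem_Icc.mp (hwin _ _ (hpath.2 x) _ (hmem x))
      have hpos : 0 < n - 1 := by omega
      have key : ∀ x : Fin (n - 1), l x = a + (x : ℕ) := by
        intro x
        have hx := x.isLt
        have k1 := strictMono_step hmono (x : ℕ) ⟨0, hpos⟩ x (by simp)
        have k2 := strictMono_step hmono (n - 2 - (x : ℕ)) x ⟨n - 2, by omega⟩ (by simp; omega)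
        have b1 := hbound ⟨0, hpos⟩
        have b2 := hbound ⟨n - 2, by omega⟩
        have b3 := hbound x
        omega
      set x : Fin (n - 1) := ⟨s, by omega⟩ with hx
      have hlx : l x = t := by rw [key]; simp [hx]; omega
      have hcs : w x.castSucc = i := by
        have hc : Fin.cast e x.castSucc = (s : Fin n) := by
          apply Fin.ext
          simp [hx, Fin.val_natCast, Nat.mod_eq_of_lt (by omega : s < n)]
        rw [hwdef]
        simp only [hc, hv]
        abel
      have hsc : w x.succ = j := by
        have hj : j = i + 1 := by
          apply Fin.ext
          rw [hij, Fin.add_def]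
          congr 1
          simp [Nat.mod_eq_of_lt (by omega : 1 < n)]
        have hc : Fin.cast e x.succ = (s : Fin n) + 1 := by
          apply Fin.ext
          rw [Fin.add_def]
          simp [hx, Fin.val_natCast, Nat.mod_eq_of_lt (by omega : s < n),
            Nat.mod_eq_of_lt (by omega : 1 < n), Nat.mod_eq_of_lt (by omega : s + 1 < n)]
        rw [hwdef, hj]
        simp only [hc, hv]
        abel
      have := hmem x
      rwa [hcs, hsc, hlx] at this
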